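/- Let T be a d-dimensional simplex in ℝ^d with vertices in ℤ^d whose interior contains exactly one point of ℤ^d, and let β₀,…,β_d be the barycentric coordinates of this interior lattice point with respect to T. Then for every partition of {0,…,d} into nonempty disjoint sets I and J, one has ∑_{i∈I} β_i ≥ ∏_{j∈J} β_j. -/

import Mathlib

open MeasureTheory Module

theorem mink {ι : Type*} [Fintype ι] [DecidableEq ι] (b : ι → ℝ) (hb : ∀ i, 0 < b i)
    (hσ : 0 < 1 - ∑ i, b i) (hlt : 1 - ∑ i, b i < ∏ i, b i) :
    ∃ m : ι → ℤ, m ≠ 0 ∧ ∀ i, |(m i : ℝ) - b i * (∑ j, (m j : ℝ))| < b i := by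
  classical
  set σ : ℝ := 1 - ∑ i, b i with hσdef
  set A : Matrix ι ι ℝ :=
    1 + Matrix.replicateCol Unit (fun i => -(b i)) * Matrix.replicateRow Unit (fun _ => (1 : ℝ)) with hA
  have hdet : A.det = σ := by
    rw [hA, Matrix.det_one_add_replicateCol_mul_replicateRow]
    simp [dotProduct, hσdef]
    ring
  set T : (ι → ℝ) →ₗ[ℝ] (ι → ℝ) := Matrix.toLin' A with hT
  have hTdet : LinearMap.det T = σ := by rw [hT, LinearMap.det_toLin']; exact hdet
  have hTapp : ∀ (x : ι → ℝ) (i : ι), T x i = x i - b i * ∑ j, x j := by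
    intro x i
    rw [hT]
    simp only [Matrix.toLin'_apply, Matrix.mulVec, dotProduct, hA]
    simp only [Matrix.add_apply, Matrix.one_apply, Matrix.mul_apply, Matrix.replicateCol_apply,
      Matrix.replicateRow_apply, Finset.univ_unique, Finset.sum_const, Finset.card_singleton, one_smul]
    simp only [add_mul, ite_mul, one_mul, zero_mul, mul_one]
    rw [Finset.sum_add_distrib, Finset.sum_ite_eq, if_pos (Finset.mem_univ i), ← Finset.mul_sum]
    ring
  -- the convex symmetric set
  set box : Set (ι → ℝ) := Set.pi Set.univ (fun i => Set.Ioo (-(b i)) (b i)) with hbox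
  set s : Set (ι → ℝ) := T ⁻¹' box with hs
  have hconv : Convex ℝ s := by
    apply Convex.linear_preimage
    exact convex_pi (fun i _ => convex_Ioo _ _)
  have hsymm : ∀ x ∈ s, -x ∈ s := by
    intro x hx
    simp only [hs, Set.mem_preimage, map_neg] at hx ⊢
    intro i hi
    have h := hx i hi
    simp only [Pi.neg_apply, Set.mem_Ioo] at h ⊢
    constructor <;> linarith [h.1, h.2]
  have hdet_ne : LinearMap.det T ≠ 0 := by rw [hTdet]; exact ne_of_gt hσ
  have hvol_box : volume box = ENNReal.ofReal (∏ i, (2 * b i)) := by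
    rw [hbox, volume_pi_pi]
    have hv : ∀ i : ι, volume (Set.Ioo (-b i) (b i)) = ENNReal.ofReal (2 * b i) := by
      intro i; rw [Real.volume_Ioo]; congr 1; ring
    rw [Finset.prod_congr rfl (fun i _ => hv i),
      ← ENNReal.ofReal_prod_of_nonneg (fun i _ => by have := hb i; positivity)]
  have hvols : volume s = ENNReal.ofReal (σ⁻¹ * ∏ i, (2 * b i)) := by
    rw [hs, Measure.addHaar_preimage_linearMap volume hdet_ne, hvol_box, hTdet,
      abs_of_pos (inv_pos.mpr hσ), ← ENNReal.ofReal_mul (le_of_lt (inv_pos.mpr hσ))]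
  have fund := ZSpan.isAddFundamentalDomain' (Pi.basisFun ℝ ι) volume
  have hF : volume (ZSpan.fundamentalDomain (Pi.basisFun ℝ ι)) = 1 := by
    rw [ZSpan.fundamentalDomain_pi_basisFun, volume_pi_pi]
    simp [Real.volume_Ico]
  have hcard : finrank ℝ (ι → ℝ) = Fintype.card ι := by
    simp [Module.finrank_pi]
  have hineq : volume (ZSpan.fundamentalDomain (Pi.basisFun ℝ ι))
      * 2 ^ finrank ℝ (ι → ℝ) < volume s := by
    rw [hF, one_mul, hvols, hcard]
    have h2 : (2 : ENNReal) ^ Fintype.card ι = ENNReal.ofReal (2 ^ Fintype.card ι) := by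
      rw [ENNReal.ofReal_pow (by norm_num : (0:ℝ) ≤ 2)]
      norm_num
    have hrpos : (0:ℝ) < σ⁻¹ * ∏ i, (2 * b i) :=
      mul_pos (inv_pos.mpr hσ) (Finset.prod_pos (fun i _ => by have := hb i; positivity))
    rw [h2, ENNReal.ofReal_lt_ofReal_iff hrpos]
    have hprod : ∏ i, (2 * b i) = 2 ^ Fintype.card ι * ∏ i, b i := by
      rw [Finset.prod_mul_distrib, Finset.prod_const, Finset.card_univ]
    rw [hprod, ← mul_assoc]
    have hgt : (1:ℝ) < σ⁻¹ * ∏ i, b i := by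
      rw [← div_eq_inv_mul, lt_div_iff₀ hσ, one_mul]
      exact hlt
    have h2pos : (0:ℝ) < 2 ^ Fintype.card ι := by positivity
    calc (2:ℝ) ^ Fintype.card ι = 1 * 2 ^ Fintype.card ι := (one_mul _).symm
      _ < (σ⁻¹ * ∏ i, b i) * 2 ^ Fintype.card ι := by
          exact mul_lt_mul_of_pos_right hgt h2pos
      _ = σ⁻¹ * 2 ^ Fintype.card ι * ∏ i, b i := by ring
  haveI hcnt : Countable (Submodule.span ℤ (Set.range (Pi.basisFun ℝ ι))).toAddSubgroup :=
    (inferInstance : Countable (Submodule.span ℤ (Set.range (Pi.basisFun ℝ ι))))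
  obtain ⟨x, hx0, hxs⟩ :=
    exists_ne_zero_mem_lattice_of_measure_mul_two_pow_lt_measure fund hsymm hconv hineq
  -- extract the integer vector
  have hxmem : (x : ι → ℝ) ∈ Submodule.span ℤ (Set.range (Pi.basisFun ℝ ι)) := x.2
  have hint : ∀ y ∈ Submodule.span ℤ (Set.range (Pi.basisFun ℝ ι)),
      ∀ i, ∃ c : ℤ, y i = (c : ℝ) := by
    intro y hy
    induction hy using Submodule.span_induction with
    | mem y hy =>
      obtain ⟨j, rfl⟩ := hy
      intro i
      by_cases h : j = i
      · exact ⟨1, by simp [h]⟩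
      · exact ⟨0, by simp [Pi.basisFun_apply, h]⟩
    | zero => exact fun i => ⟨0, by simp⟩
    | add y z _ _ hy hz =>
      intro i
      obtain ⟨c, hc⟩ := hy i
      obtain ⟨c', hc'⟩ := hz i
      exact ⟨c + c', by push_cast [Pi.add_apply, hc, hc']; ring⟩
    | smul a y _ hy =>
      intro i
      obtain ⟨c, hc⟩ := hy i
      exact ⟨a * c, by push_cast [Pi.smul_apply, hc]; simp [hc]⟩
  choose c hc using hint _ hxmem
  refine ⟨c, ?_, ?_⟩
  · intro hc0
    apply hx0
    have : (x : ι → ℝ) = 0 := by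
      funext i
      rw [hc i, hc0]
      simp
    exact Subtype.ext this
  · intro i
    have hmem := hxs
    rw [hs, Set.mem_preimage, hbox, Set.mem_pi] at hmem
    have h := hmem i (Set.mem_univ i)
    rw [hTapp] at h
    simp only [Set.mem_Ioo] at h
    have hsx : ∑ j, (x : ι → ℝ) j = ∑ j, (c j : ℝ) := by
      exact Finset.sum_congr rfl (fun j _ => hc j)
    rw [hc i, hsx] at h
    rw [abs_sub_lt_iff]
    constructor <;> linarith [h.1, h.2]

theorem core_lemma {n : ℕ} (β : Fin n → ℝ) (J : Finset (Fin n))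
    (hpos : ∀ i, 0 < β i) (hsum : ∑ i, β i = 1)
    (hlt : ∑ i ∈ Jᶜ, β i < ∏ j ∈ J, β j) (hJc : Jᶜ.Nonempty) :
    ∃ m : Fin n → ℕ, (∀ i ∉ J, m i = 0) ∧ 1 ≤ ∑ i, m i ∧
      ∀ i, (m i : ℝ) < β i * (1 + ∑ i, m i) := by
  classical
  have hcompl : ∑ i ∈ Jᶜ, β i = 1 - ∑ i ∈ J, β i := by
    have h := Finset.sum_add_sum_compl J β
    rw [hsum] at h
    linarith
  set b : {i // i ∈ J} → ℝ := fun i => β i with hb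
  have hsumJ : ∑ i : {i // i ∈ J}, b i = ∑ i ∈ J, β i := Finset.sum_coe_sort J β
  have hprodJ : ∏ i : {i // i ∈ J}, b i = ∏ i ∈ J, β i := Finset.prod_coe_sort J β
  have hσpos : 0 < 1 - ∑ i : {i // i ∈ J}, b i := by
    rw [hsumJ, ← hcompl]
    exact Finset.sum_pos (fun i _ => hpos i) hJc
  have hltb : 1 - ∑ i : {i // i ∈ J}, b i < ∏ i : {i // i ∈ J}, b i := by
    rw [hsumJ, ← hcompl, hprodJ]; exact hlt
  obtain ⟨m', hm'0, hm'⟩ := mink b (fun i => hpos i) hσpos hltb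
  have hblt1 : ∀ i, b i < 1 := by
    intro i
    have h1 : b i ≤ ∑ j : {i // i ∈ J}, b j :=
      Finset.single_le_sum (f := b) (fun j _ => le_of_lt (hpos (j : Fin n))) (Finset.mem_univ i)
    linarith
  -- normalize the sign so that the total sum is positive
  obtain ⟨m₁, hm₁, hM₁pos⟩ : ∃ m₁ : {i // i ∈ J} → ℤ,
      (∀ i, |(m₁ i : ℝ) - b i * ∑ j, (m₁ j : ℝ)| < b i) ∧ 0 < ∑ j, m₁ j := by
    have hMne : (∑ j, m' j) ≠ 0 := by
      intro h0
      apply hm'0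
      funext i
      have h := hm' i
      have h0R : ∑ j, ((m' j : ℝ)) = 0 := by
        have : ((∑ j, m' j : ℤ) : ℝ) = 0 := by rw [h0]; simp
        rwa [Int.cast_sum] at this
      rw [h0R, mul_zero, sub_zero] at h
      have habs : |(m' i : ℝ)| < 1 := lt_trans h (hblt1 i)
      have habs' := abs_lt.mp habs
      have h1 : (-1 : ℤ) < m' i := by exact_mod_cast habs'.1
      have h2 : m' i < 1 := by exact_mod_cast habs'.2
      simp only [Pi.zero_apply]
      omega
    rcases lt_or_gt_of_ne hMne with hneg | hposM
    · refine ⟨-m', ?_, ?_⟩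
      · intro i
        have h := hm' i
        have : ((-m' i : ℤ) : ℝ) - b i * ∑ j, ((-m' j : ℤ) : ℝ)
            = -((m' i : ℝ) - b i * ∑ j, (m' j : ℝ)) := by
          push_cast
          rw [Finset.sum_neg_distrib]
          ring
        simp only [Pi.neg_apply]
        rw [this, abs_neg]
        exact h
      · simp only [Pi.neg_apply, Finset.sum_neg_distrib]
        omega
    · exact ⟨m', hm', hposM⟩
  set M : ℤ := ∑ j, m₁ j with hM
  have hM1 : 1 ≤ M := hM₁pos
  have hMR : ((M : ℤ) : ℝ) = ∑ j, (m₁ j : ℝ) := by rw [hM]; push_cast; rfl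
  have hnonneg : ∀ i, 0 ≤ m₁ i := by
    intro i
    have h := hm₁ i
    have h1 : (m₁ i : ℝ) > b i * ((M : ℝ)) - b i := by
      rw [hMR]
      have := abs_lt.mp h
      linarith [this.1]
    have h2 : (0:ℝ) ≤ b i * ((M : ℝ)) - b i := by
      have : (1:ℝ) ≤ (M : ℝ) := by exact_mod_cast hM1
      have hbi := hpos (i : Fin n)
      nlinarith
    have : (0:ℝ) < (m₁ i : ℝ) := lt_of_le_of_lt h2 h1
    exact_mod_cast le_of_lt this
  -- build the natural-number witness
  set m : Fin n → ℕ := fun i => if h : i ∈ J then (m₁ ⟨i, h⟩).toNat else 0 with hm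
  have hm0 : ∀ i ∉ J, m i = 0 := by
    intro i hi
    simp only [hm, dif_neg hi]
  have hmval : ∀ (i : Fin n) (h : i ∈ J), ((m i : ℕ) : ℤ) = m₁ ⟨i, h⟩ := by
    intro i h
    simp only [hm, dif_pos h]
    exact Int.toNat_of_nonneg (hnonneg ⟨i, h⟩)
  have hsumm : ((∑ i, m i : ℕ) : ℤ) = M := by
    rw [hM]
    have h1 : ∑ i, m i = ∑ i ∈ J, m i := by
      rw [← Finset.sum_subset (Finset.subset_univ J)]
      intro x _ hx
      exact hm0 x hx
    rw [h1]
    rw [← Finset.sum_coe_sort J m]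
    push_cast
    exact Finset.sum_congr rfl (fun i _ => hmval i i.2)
  refine ⟨m, hm0, ?_, ?_⟩
  · have : (1 : ℤ) ≤ ((∑ i, m i : ℕ) : ℤ) := by rw [hsumm]; exact hM1
    exact_mod_cast this
  · intro i
    have hMcast : (1 : ℝ) + ((∑ i, m i : ℕ) : ℝ) = 1 + (M : ℝ) := by
      have : (((∑ i, m i : ℕ) : ℤ) : ℝ) = (M : ℝ) := by rw [hsumm]
      push_cast at this ⊢
      linarith
    by_cases h : i ∈ J
    · have habs := hm₁ ⟨i, h⟩
      have h1 : (m₁ ⟨i, h⟩ : ℝ) < b ⟨i, h⟩ * ∑ j, (m₁ j : ℝ) + b ⟨i, h⟩ := by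
        have := abs_lt.mp habs
        linarith [this.2]
      have h2 : ((m i : ℕ) : ℝ) = (m₁ ⟨i, h⟩ : ℝ) := by
        have := hmval i h
        exact_mod_cast congrArg (fun z : ℤ => (z : ℝ)) this
      rw [h2, hMcast]
      calc (m₁ ⟨i, h⟩ : ℝ) < b ⟨i, h⟩ * ∑ j, (m₁ j : ℝ) + b ⟨i, h⟩ := h1
        _ = β i * (1 + (M:ℝ)) := by rw [← hMR]; simp only [hb]; ring
    · rw [hm0 i h, hMcast]
      have : (0:ℝ) < 1 + (M:ℝ) := by
        have : (1:ℝ) ≤ (M:ℝ) := by exact_mod_cast hM1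
        linarith
      have := mul_pos (hpos i) this
      simpa using this

/-- Theorem 1 (polynomial inequalities for the barycentric coordinates of the
unique interior lattice point of a lattice simplex). -/
theorem stmt0 (d : ℕ) (v : Fin (d + 1) → Fin d → ℤ)
    (hind : AffineIndependent ℝ (fun i => fun j => ((v i j : ℤ) : ℝ)))
    (q : Fin d → ℤ)
    (hq : (fun j => ((q j : ℤ) : ℝ)) ∈
      interior (convexHull ℝ (Set.range (fun i => fun j => ((v i j : ℤ) : ℝ)))))
    (huniq : ∀ q' : Fin d → ℤ,
      (fun j => ((q' j : ℤ) : ℝ)) ∈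
        interior (convexHull ℝ (Set.range (fun i => fun j => ((v i j : ℤ) : ℝ)))) → q' = q)
    (β : Fin (d + 1) → ℝ)
    (hsum : ∑ i, β i = 1)
    (hbar : (∑ i, β i • (fun j => ((v i j : ℤ) : ℝ))) = fun j => ((q j : ℤ) : ℝ))
    (I J : Finset (Fin (d + 1))) (hI : I.Nonempty) (hJ : J.Nonempty)
    (hdisj : Disjoint I J) (hunion : I ∪ J = Finset.univ) :
    ∑ i ∈ I, β i ≥ ∏ j ∈ J, β j := by
  classical
  set vR : Fin (d + 1) → (Fin d → ℝ) := fun i => fun j => ((v i j : ℤ) : ℝ) with hvR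
  set qR : Fin d → ℝ := fun j => ((q j : ℤ) : ℝ) with hqR
  -- the affine span is everything since the interior of the hull is nonempty
  have htop : affineSpan ℝ (Set.range vR) = ⊤ := by
    have : (interior (convexHull ℝ (Set.range vR))).Nonempty := ⟨qR, hq⟩
    exact interior_convexHull_nonempty_iff_affineSpan_eq_top.mp this
  let b : AffineBasis (Fin (d + 1)) ℝ (Fin d → ℝ) := ⟨vR, hind, htop⟩
  have hbcoe : ⇑b = vR := rfl
  have hint : interior (convexHull ℝ (Set.range vR)) = {x | ∀ i, 0 < b.coord i x} := by
    rw [← hbcoe]; exact b.interior_convexHull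
  -- for any weights summing to 1, the coordinates of the linear combination are the weights
  have coord_comb : ∀ (w : Fin (d + 1) → ℝ), ∑ i, w i = 1 →
      ∀ i, b.coord i (∑ j, w j • vR j) = w i := by
    intro w hw i
    have h1 : (Finset.univ : Finset (Fin (d + 1))).affineCombination ℝ vR w
        = ∑ j, w j • vR j := by
      rw [Finset.univ.affineCombination_eq_linear_combination vR w hw]
    rw [← h1, ← hbcoe]
    exact b.coord_apply_combination_of_mem (Finset.mem_univ i) hw
  have hβco : ∀ i, b.coord i qR = β i := by
    intro i
    have := coord_comb β hsum i
    rwa [show (∑ j, β j • vR j) = qR from hbar] at this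
  have hβpos : ∀ i, 0 < β i := by
    intro i
    have hq' : qR ∈ {x | ∀ i, 0 < b.coord i x} := by rw [← hint]; exact hq
    have := hq' i
    rwa [hβco i] at this
  -- I is the complement of J
  have hIc : I = Jᶜ := by
    apply Finset.eq_of_subset_of_card_le
    · intro i hi
      simp only [Finset.mem_compl]
      exact fun hij => (Finset.disjoint_left.mp hdisj) hi hij
    · have : I.card + J.card = Fintype.card (Fin (d + 1)) := by
        rw [← Finset.card_union_of_disjoint hdisj, hunion, Finset.card_univ]
      have hc : Jᶜ.card = Fintype.card (Fin (d + 1)) - J.card := Finset.card_compl J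
      omega
  by_contra hcon
  push_neg at hcon
  have hlt : ∑ i ∈ Jᶜ, β i < ∏ j ∈ J, β j := by rwa [hIc] at hcon
  obtain ⟨m, hm0, hm1, hmlt⟩ := core_lemma β J hβpos hsum hlt (hIc ▸ hI)
  set M : ℕ := ∑ i, m i with hM
  -- the new weights
  set w : Fin (d + 1) → ℝ := fun i => β i * (1 + M) - m i with hw
  have hMR : (M : ℝ) = ∑ i, (m i : ℝ) := by rw [hM]; push_cast; rfl
  have hw1 : ∑ i, w i = 1 := by
    simp only [hw]
    rw [Finset.sum_sub_distrib, ← Finset.sum_mul, hsum, one_mul, ← hMR]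
    ring
  have hwpos : ∀ i, 0 < w i := by
    intro i
    have := hmlt i
    simp only [hw]
    have : (m i : ℝ) < β i * (1 + M) := by
      calc (m i : ℝ) < β i * (1 + ∑ i, m i) := hmlt i
        _ = β i * (1 + M) := by push_cast [hM]; ring
    linarith
  -- the second lattice point
  set q' : Fin d → ℤ := fun t => (1 + M) * q t - ∑ i, (m i : ℤ) * v i t with hq'
  have hq'R : (fun t => ((q' t : ℤ) : ℝ)) = ∑ j, w j • vR j := by
    funext t
    have hbt : ∑ i, β i * ((v i t : ℤ) : ℝ) = ((q t : ℤ) : ℝ) := by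
      have := congrFun hbar t
      simpa [Finset.sum_apply] using this
    have h2 : (∑ j, w j • vR j) t = ∑ j, w j * ((v j t : ℤ) : ℝ) := by
      simp [Finset.sum_apply]; rfl
    have expand : ∑ x, w x * ((v x t : ℤ) : ℝ)
        = (1 + (M : ℝ)) * ∑ x, β x * ((v x t : ℤ) : ℝ)
          - ∑ x, (m x : ℝ) * ((v x t : ℤ) : ℝ) := by
      simp only [hw]
      rw [Finset.mul_sum, ← Finset.sum_sub_distrib]
      exact Finset.sum_congr rfl (fun x _ => by ring)
    rw [h2, expand, hbt]
    simp only [hq']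
    push_cast
    ring
  have hq'mem : (fun t => ((q' t : ℤ) : ℝ)) ∈ interior (convexHull ℝ (Set.range vR)) := by
    rw [hint]
    intro i
    rw [hq'R, coord_comb w hw1 i]
    exact hwpos i
  have hqq : q' = q := huniq q' hq'mem
  obtain ⟨i₀, hi₀⟩ := hI
  have hmi₀ : m i₀ = 0 := by
    apply hm0
    rw [hIc] at hi₀
    exact Finset.mem_compl.mp hi₀
  have hwi₀ : w i₀ = β i₀ := by
    have h1 : b.coord i₀ (fun t => ((q' t : ℤ) : ℝ)) = w i₀ := by
      rw [hq'R]; exact coord_comb w hw1 i₀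
    rw [hqq] at h1
    have h2 : b.coord i₀ qR = β i₀ := hβco i₀
    rw [← h1, ← h2]
  have : β i₀ * (1 + (M : ℝ)) = β i₀ := by
    have := hwi₀
    simp only [hw, hmi₀] at this
    push_cast at this
    linarith
  have hMpos : (1 : ℝ) ≤ (M : ℝ) := by exact_mod_cast hm1
  nlinarith [hβpos i₀]
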